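/- arXiv:math/0411369 — 4 statements merged into one kernel-verified Lean document; each statement's English description precedes it below -/
import Mathlib

section
/- Let G be a finite group acting on a finite set, let J be the set of conjugacy classes of G, and for a conjugacy class ⟨g⟩ let λ_{⟨g⟩} denote the number of fixed points of any element of ⟨g⟩. Define c_{⟨g⟩} = |⟨g⟩|/|G| and c'_{⟨g⟩} = (|⟨g⟩|/|G|)·λ_{⟨g⟩}. If the action is transitive and the set is nonempty, then Σ_{⟨g⟩∈J} c'_{⟨g⟩} = 1 (Cauchy–Frobenius), and consequently I_c(c') := 1 − Σ_j c'_j + Σ_{j: c'_j≠0} c'_j · log(c'_j/c_j) equals (1/|G|) · Σ_{g∈G, λ_g≠0} λ_g · log λ_g. -/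
open scoped Classical in
theorem cauchy_frobenius_entropy
    {G : Type*} [Group G] [Fintype G] [Fintype (ConjClasses G)]
    {X : Type*} [Fintype X] [Nonempty X] [DecidableEq X] [MulAction G X]
    (htrans : MulAction.IsPretransitive G X)
    (lam : ConjClasses G → ℕ)
    (hlam : ∀ g : G, lam (ConjClasses.mk g)
      = (Finset.univ.filter (fun x : X => g • x = x)).card)
    (c c' : ConjClasses G → ℝ)
    (hc : ∀ j, c j = (Nat.card j.carrier : ℝ) / (Fintype.card G : ℝ))
    (hc' : ∀ j, c' j = c j * lam j) :
    ∑ j, c' j = 1 ∧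
    1 - ∑ j, c' j
      + ∑ j ∈ Finset.univ.filter (fun j => c' j ≠ 0), c' j * Real.log (c' j / c j)
      = (1 / (Fintype.card G : ℝ)) *
          ∑ g ∈ Finset.univ.filter
              (fun g : G => (Finset.univ.filter (fun x : X => g • x = x)).card ≠ 0),
            ((Finset.univ.filter (fun x : X => g • x = x)).card : ℝ) *
              Real.log ((Finset.univ.filter (fun x : X => g • x = x)).card) := by
  have hG : (0 : ℝ) < (Fintype.card G : ℝ) := by positivity
  -- cardinality of the carrier as a finset filter
  have hcard : ∀ j : ConjClasses G,
      (Nat.card j.carrier : ℕ) = (Finset.univ.filter (fun g : G => ConjClasses.mk g = j)).card := by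
    intro j
    rw [Nat.card_eq_fintype_card, ← Set.toFinset_card]
    congr 1
    ext g
    simp [ConjClasses.mem_carrier_iff_mk_eq]
  -- grouping a sum over G by conjugacy classes
  have hgroup : ∀ f : ConjClasses G → ℝ,
      ∑ j, (Nat.card j.carrier : ℝ) * f j = ∑ g : G, f (ConjClasses.mk g) := by
    intro f
    rw [← Finset.sum_fiberwise Finset.univ (fun g : G => ConjClasses.mk g)
      (fun g : G => f (ConjClasses.mk g))]
    refine Finset.sum_congr rfl fun j _ => ?_
    rw [Finset.sum_congr rfl (fun g hg => by
      rw [(Finset.mem_filter.mp hg).2]), Finset.sum_const, nsmul_eq_mul, hcard]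
  -- Burnside / Cauchy-Frobenius
  have hburn : ∑ g : G, ((Finset.univ.filter (fun x : X => g • x = x)).card : ℝ)
      = (Fintype.card G : ℝ) := by
    have h1 : Fintype.card (Quotient (MulAction.orbitRel G X)) = 1 := by
      have : Subsingleton (MulAction.orbitRel.Quotient G X) :=
        (MulAction.pretransitive_iff_subsingleton_quotient G X).mp htrans
      have : Nonempty (Quotient (MulAction.orbitRel G X)) := ⟨⟦Classical.arbitrary X⟧⟩
      exact Fintype.card_eq_one_iff.mpr ⟨Classical.arbitrary _, fun b => Subsingleton.elim _ _⟩
    have h2 := MulAction.sum_card_fixedBy_eq_card_orbits_mul_card_group G X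
    rw [h1, one_mul] at h2
    have h3 : ∀ g : G, Fintype.card (MulAction.fixedBy X g)
        = (Finset.univ.filter (fun x : X => g • x = x)).card := by
      intro g
      rw [Fintype.card_subtype]
      congr 1
    have h4 := congrArg (Nat.cast : ℕ → ℝ) h2
    push_cast at h4
    rw [← h4]
    exact Finset.sum_congr rfl fun g _ => by rw [h3 g]
  -- c j > 0
  have hcpos : ∀ j, 0 < c j := by
    intro j
    rw [hc]
    apply div_pos _ hG
    have : (0 : ℕ) < Nat.card j.carrier := by
      have := j.exists_rep
      obtain ⟨g, hg⟩ := this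
      have : g ∈ j.carrier := by rw [ConjClasses.mem_carrier_iff_mk_eq, hg]
      exact Nat.card_pos_iff.mpr ⟨⟨g, this⟩, Set.Finite.to_subtype (Set.toFinite _)⟩
    exact_mod_cast this
  -- first part: sum of c' = 1
  have hsum : ∑ j, c' j = 1 := by
    have : ∑ j, c' j = (1 / (Fintype.card G : ℝ)) *
        ∑ j, (Nat.card j.carrier : ℝ) * (lam j : ℝ) := by
      rw [Finset.mul_sum]
      refine Finset.sum_congr rfl fun j _ => ?_
      rw [hc', hc]; ring
    rw [this, hgroup fun j => (lam j : ℝ)]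
    rw [Finset.sum_congr rfl fun g _ => by rw [hlam g], hburn]
    field_simp
  refine ⟨hsum, ?_⟩
  rw [hsum]
  -- second part
  have hkey : ∀ j, c' j * Real.log (c' j / c j)
      = (Nat.card j.carrier : ℝ) / (Fintype.card G : ℝ) *
        (if lam j = 0 then 0 else (lam j : ℝ) * Real.log (lam j)) := by
    intro j
    by_cases h : lam j = 0
    · simp [hc', h]
    · rw [if_neg h]
      have hd : c' j / c j = (lam j : ℝ) := by
        rw [hc', mul_comm, mul_div_assoc, div_self (hcpos j).ne', mul_one]
      rw [hd, hc', hc]; ring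
  have hne : ∀ j, c' j ≠ 0 ↔ lam j ≠ 0 := by
    intro j
    rw [hc']
    constructor
    · intro h hl; simp [hl] at h
    · intro h
      exact mul_ne_zero (hcpos j).ne' (by exact_mod_cast h)
  calc 1 - 1 + ∑ j ∈ Finset.univ.filter (fun j => c' j ≠ 0), c' j * Real.log (c' j / c j)
      = ∑ j, c' j * Real.log (c' j / c j) := by
        rw [sub_self, zero_add]
        apply Finset.sum_subset (Finset.subset_univ _)
        intro j _ hj
        simp only [Finset.mem_filter, Finset.mem_univ, true_and, not_not] at hj
        simp [hj]
    _ = (1 / (Fintype.card G : ℝ)) * ∑ j, (Nat.card j.carrier : ℝ) *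
          (if lam j = 0 then 0 else (lam j : ℝ) * Real.log (lam j)) := by
        rw [Finset.mul_sum]
        refine Finset.sum_congr rfl fun j _ => ?_
        rw [hkey]; ring
    _ = (1 / (Fintype.card G : ℝ)) * ∑ g : G,
          (if lam (ConjClasses.mk g) = 0 then 0
            else (lam (ConjClasses.mk g) : ℝ) * Real.log (lam (ConjClasses.mk g))) := by
        rw [hgroup]
    _ = _ := by
        congr 1
        rw [Finset.sum_filter]
        refine Finset.sum_congr rfl fun g _ => ?_
        rw [hlam g]
        by_cases h : (Finset.univ.filter (fun x : X => g • x = x)).card = 0 <;> simp [h]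
end

section
/- Let Y_n be the number of fixed points of a uniformly random permutation of {1,...,n}. Then for every 0 ≤ k ≤ n, |Prob(Y_n = k) − e^{−1}/k!| ≤ 2^{n+1}/(n+1)!. -/
open Finset Equiv

lemma aux_choose_le_two_pow (n j : ℕ) : Nat.choose n j ≤ 2 ^ n := by
  rcases le_or_gt j n with h | h
  · calc Nat.choose n j ≤ ∑ i ∈ Finset.range (n+1), Nat.choose n i :=
        Finset.single_le_sum (fun i _ => Nat.zero_le _) (Finset.mem_range_succ_iff.mpr h)
    _ = 2 ^ n := Nat.sum_range_choose n
  · simp [Nat.choose_eq_zero_of_lt h]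

lemma aux_choose_succ_le_two_pow (n k : ℕ) : Nat.choose (n+1) k ≤ 2 ^ n := by
  cases k with
  | zero => simpa using Nat.one_le_two_pow
  | succ j =>
    rw [Nat.choose_succ_succ]
    rcases le_or_gt (j+1) n with h | h
    · have hp : Nat.choose n j + Nat.choose n (j+1)
          = ∑ i ∈ ({j, j+1} : Finset ℕ), Nat.choose n i :=
        (Finset.sum_pair (by omega)).symm
      rw [hp]
      calc ∑ i ∈ ({j, j+1} : Finset ℕ), Nat.choose n i
          ≤ ∑ i ∈ Finset.range (n+1), Nat.choose n i :=
            Finset.sum_le_sum_of_subset (by intro x hx; simp at hx ⊢; omega)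
        _ = 2 ^ n := Nat.sum_range_choose n
    · rw [Nat.choose_eq_zero_of_lt h, Nat.add_zero]
      exact aux_choose_le_two_pow n j

lemma aux_card_fix_finset {n : ℕ} (S : Finset (Fin n)) :
    (Finset.univ.filter (fun σ : Equiv.Perm (Fin n) =>
        Finset.univ.filter (fun i => σ i = i) = S)).card = numDerangements (n - S.card) := by
  classical
  rw [← Fintype.card_subtype]
  have e1 : {σ : Equiv.Perm (Fin n) // Finset.univ.filter (fun i => σ i = i) = S}
      ≃ { f : Equiv.Perm (Fin n) // ∀ a, ¬ (a ∉ S) ↔ a ∈ Function.fixedPoints f } :=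
    Equiv.subtypeEquivRight (by
      intro f
      constructor
      · intro h a
        simp only [not_not, Function.mem_fixedPoints, Function.IsFixedPt]
        rw [← h]; simp
      · intro h
        ext a
        simp only [Finset.mem_filter, Finset.mem_univ, true_and]
        have := h a
        simp only [not_not, Function.mem_fixedPoints, Function.IsFixedPt] at this
        exact this.symm)
  rw [Fintype.card_congr (e1.trans (derangements.subtypeEquiv (fun a => a ∉ S)).symm),
    card_derangements_eq_numDerangements]
  congr 1
  rw [Fintype.card_subtype_compl, Fintype.card_fin]
  congr 1
  exact Fintype.card_coe S

lemma aux_count_fixed (n k : ℕ) (hk : k ≤ n) :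
    (Finset.univ.filter (fun σ : Equiv.Perm (Fin n) =>
        (Finset.univ.filter (fun i => σ i = i)).card = k)).card
      = Nat.choose n k * numDerangements (n - k) := by
  classical
  rw [Finset.card_eq_sum_card_fiberwise
    (f := fun σ : Equiv.Perm (Fin n) => Finset.univ.filter (fun i => σ i = i))
    (t := Finset.powersetCard k Finset.univ)
    (fun σ hσ => by
      simp only [Finset.mem_coe, Finset.mem_filter] at hσ
      exact Finset.mem_powersetCard.mpr ⟨Finset.subset_univ _, hσ.2⟩)]
  rw [Finset.sum_congr rfl (fun S hS => ?_), Finset.sum_const,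
    Finset.card_powersetCard, Finset.card_univ, Fintype.card_fin, smul_eq_mul]
  have hSk : S.card = k := (Finset.mem_powersetCard.mp hS).2
  rw [Finset.filter_filter]
  have hfe : Finset.filter (fun σ : Equiv.Perm (Fin n) =>
        ((Finset.univ.filter (fun i => σ i = i)).card = k) ∧
        Finset.univ.filter (fun i => σ i = i) = S) Finset.univ
      = Finset.filter (fun σ : Equiv.Perm (Fin n) =>
        Finset.univ.filter (fun i => σ i = i) = S) Finset.univ := by
    apply Finset.filter_congr
    intro σ _
    constructor
    · exact fun h => h.2
    · exact fun h => ⟨by rw [h, hSk], h⟩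
  rw [hfe, aux_card_fix_finset S, hSk]

lemma aux_numDer_div (m : ℕ) :
    (numDerangements m : ℝ) / m.factorial
      = ∑ i ∈ Finset.range (m+1), (-1:ℝ)^i / i.factorial := by
  rw [← Int.cast_natCast, numDerangements_sum]
  push_cast
  rw [Finset.sum_div]
  refine Finset.sum_congr rfl ?_
  intro x hx
  have h_le : x ≤ m := Finset.mem_range_succ_iff.mp hx
  rw [Nat.ascFactorial_eq_div, add_tsub_cancel_of_le h_le]
  push_cast [Nat.factorial_dvd_factorial h_le]
  field_simp [Nat.factorial_ne_zero]

theorem fixed_points_poisson_approx (n k : ℕ) (hk : k ≤ n) :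
    |((Finset.univ.filter (fun σ : Equiv.Perm (Fin n) =>
          (Finset.univ.filter (fun i => σ i = i)).card = k)).card : ℝ)
        / (Nat.factorial n : ℝ)
      - Real.exp (-1) / (Nat.factorial k : ℝ)|
    ≤ 2 ^ (n + 1) / (Nat.factorial (n + 1) : ℝ) := by
  rw [aux_count_fixed n k hk]
  set m := n - k with hm
  have hk0 : (0:ℝ) < k.factorial := by exact_mod_cast Nat.factorial_pos k
  have hm0 : (0:ℝ) < m.factorial := by exact_mod_cast Nat.factorial_pos m
  have hn0 : (0:ℝ) < n.factorial := by exact_mod_cast Nat.factorial_pos n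
  have hm10 : (0:ℝ) < (m+1).factorial := by exact_mod_cast Nat.factorial_pos (m+1)
  have hfac : (Nat.choose n k : ℝ) * k.factorial * m.factorial = n.factorial := by
    exact_mod_cast congrArg (Nat.cast (R := ℝ)) (Nat.choose_mul_factorial_mul_factorial hk)
  have key : ((Nat.choose n k * numDerangements m : ℕ) : ℝ) / n.factorial
      = ((numDerangements m : ℝ) / m.factorial) / k.factorial := by
    have hc0 : (Nat.choose n k : ℝ) ≠ 0 := by
      exact_mod_cast (Nat.choose_pos hk).ne'
    push_cast
    rw [div_div, ← hfac,
      show (Nat.choose n k:ℝ)*k.factorial*m.factorial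
        = (Nat.choose n k:ℝ)*(m.factorial*k.factorial) by ring,
      mul_div_mul_left _ _ hc0]
  rw [key]
  have hre : (numDerangements m : ℝ)/m.factorial/k.factorial - Real.exp (-1)/k.factorial
      = ((numDerangements m : ℝ)/m.factorial - Real.exp (-1))/k.factorial := by ring
  rw [hre, abs_div, abs_of_pos hk0]
  have hbound : |(numDerangements m : ℝ)/m.factorial - Real.exp (-1)| ≤ 2 / (m+1).factorial := by
    rw [aux_numDer_div, abs_sub_comm]
    have hb := Real.exp_bound (x := (-1:ℝ)) (by norm_num) (n := m+1) (Nat.succ_pos m)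
    simp only [abs_neg, abs_one, one_pow, one_mul] at hb
    refine le_trans hb ?_
    rw [div_le_div_iff₀ (by positivity) hm10]
    push_cast
    nlinarith [hm10]
  calc |(numDerangements m : ℝ)/m.factorial - Real.exp (-1)| / k.factorial
      ≤ (2 / (m+1).factorial) / k.factorial := by gcongr
    _ ≤ 2^(n+1)/((n+1).factorial : ℝ) := by
        rw [div_div, div_le_div_iff₀ (by positivity) (by positivity)]
        have h1 : Nat.choose (n+1) k * k.factorial * (m+1).factorial = (n+1).factorial := by
          have h2 := Nat.choose_mul_factorial_mul_factorial (Nat.le_succ_of_le hk)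
          rwa [show n+1-k = m+1 by omega] at h2
        have hnat : 2 * Nat.factorial (n+1) ≤ 2^(n+1) * (Nat.factorial (m+1) * Nat.factorial k) := by
          calc 2 * (n+1).factorial
              = 2 * (Nat.choose (n+1) k * k.factorial * (m+1).factorial) := by rw [h1]
            _ ≤ 2 * (2^n * k.factorial * (m+1).factorial) := by
                have hc := aux_choose_succ_le_two_pow n k
                exact Nat.mul_le_mul_left _ (Nat.mul_le_mul_right _ (Nat.mul_le_mul_right _ hc))
            _ = 2^(n+1) * ((m+1).factorial * k.factorial) := by ring
        exact_mod_cast hnat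
end

section
/- Let J be a finite index set and c ∈ (ℝ≥0)^J. Define Λ(t) = Σ_{j∈J} c_j (e^{t_j} − 1) for t ∈ ℝ^J. Then for every y ∈ (ℝ≥0)^J with y_j = 0 whenever c_j = 0, the Legendre transform Λ*(y) = sup_{t∈ℝ^J} (⟨y,t⟩ − Λ(t)) equals Σ_{j∈J} c_j − Σ_{j: c_j≠0} y_j + Σ_{j: c_j≠0, y_j≠0} y_j · log(y_j/c_j). -/
open scoped Classical in
theorem legendre_transform_of_poisson_cgf
    {J : Type*} [Fintype J] (c : J → ℝ) (hc : ∀ j, 0 ≤ c j)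
    (y : J → ℝ) (hy : ∀ j, 0 ≤ y j) (hyc : ∀ j, c j = 0 → y j = 0) :
    (⨆ t : J → ℝ, (∑ j, y j * t j - ∑ j, c j * (Real.exp (t j) - 1)))
      = ∑ j, c j - ∑ j ∈ Finset.univ.filter (fun j => c j ≠ 0), y j
        + ∑ j ∈ Finset.univ.filter (fun j => c j ≠ 0 ∧ y j ≠ 0),
            y j * Real.log (y j / c j) := by
  classical
  set M : J → ℝ := fun j => c j - y j +
    (if c j ≠ 0 ∧ y j ≠ 0 then y j * Real.log (y j / c j) else 0) with hM
  have key : ∀ j (s : ℝ), y j * s - c j * (Real.exp s - 1) ≤ M j := by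
    intro j s
    by_cases hcj : c j = 0
    · have hyj := hyc j hcj
      simp [hM, hcj, hyj]
    by_cases hyj : y j = 0
    · have hne : ¬ (c j ≠ 0 ∧ y j ≠ 0) := by tauto
      simp only [hM]
      rw [if_neg hne, hyj]
      nlinarith [Real.exp_pos s, hc j]
    · have hcpos : 0 < c j := lt_of_le_of_ne (hc j) (Ne.symm hcj)
      have hypos : 0 < y j := lt_of_le_of_ne (hy j) (Ne.symm hyj)
      simp only [hM]
      rw [if_pos (⟨hcj, hyj⟩ : c j ≠ 0 ∧ y j ≠ 0)]
      set u : ℝ := s - Real.log (y j / c j) with hu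
      have hexp : Real.exp s = (y j / c j) * Real.exp u := by
        rw [hu, Real.exp_sub, Real.exp_log (by positivity)]
        field_simp
      have h1 : u + 1 ≤ Real.exp u := Real.add_one_le_exp u
      have hs : s = u + Real.log (y j / c j) := by rw [hu]; ring
      have hys : y j * s = y j * u + y j * Real.log (y j / c j) := by rw [hs]; ring
      have hce : c j * Real.exp s = y j * Real.exp u := by
        rw [hexp]; field_simp
      have hmul : y j * (u + 1) ≤ y j * Real.exp u :=
        mul_le_mul_of_nonneg_left h1 (le_of_lt hypos)
      have hexp2 : c j * (Real.exp s - 1) = y j * Real.exp u - c j := by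
        rw [mul_sub, hce]; ring
      clear_value u
      linarith [hys, hmul, hexp2]
  have bdd : BddAbove (Set.range fun t : J → ℝ =>
      ∑ j, y j * t j - ∑ j, c j * (Real.exp (t j) - 1)) := by
    refine ⟨∑ j, M j, ?_⟩
    rintro _ ⟨t, rfl⟩
    dsimp only
    rw [← Finset.sum_sub_distrib]
    exact Finset.sum_le_sum fun j _ => key j (t j)
  have upper : (⨆ t : J → ℝ, (∑ j, y j * t j - ∑ j, c j * (Real.exp (t j) - 1)))
      ≤ ∑ j, M j := by
    apply ciSup_le
    intro t
    rw [← Finset.sum_sub_distrib]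
    exact Finset.sum_le_sum fun j _ => key j (t j)
  have lower : ∑ j, M j ≤
      ⨆ t : J → ℝ, (∑ j, y j * t j - ∑ j, c j * (Real.exp (t j) - 1)) := by
    set tn : ℕ → J → ℝ := fun n j =>
      if c j ≠ 0 ∧ y j ≠ 0 then Real.log (y j / c j) else -(n : ℝ) with htn
    have hval : ∀ n : ℕ, (∑ j, y j * tn n j - ∑ j, c j * (Real.exp (tn n j) - 1))
        = ∑ j, (if c j ≠ 0 ∧ y j ≠ 0 then M j
            else c j - c j * Real.exp (-(n : ℝ))) := by
      intro n
      rw [← Finset.sum_sub_distrib]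
      apply Finset.sum_congr rfl
      intro j _
      by_cases h : c j ≠ 0 ∧ y j ≠ 0
      · simp only [htn, if_pos h, hM]
        have hcpos : 0 < c j := lt_of_le_of_ne (hc j) (Ne.symm h.1)
        have hypos : 0 < y j := lt_of_le_of_ne (hy j) (Ne.symm h.2)
        rw [Real.exp_log (by positivity)]
        field_simp
        ring
      · have hyj : y j = 0 := by
          by_cases hcj : c j = 0
          · exact hyc j hcj
          · push_neg at h; exact h hcj
        simp only [htn, if_neg h]
        rw [hyj]; ring
    have htend : Filter.Tendsto (fun n : ℕ =>
        ∑ j, (if c j ≠ 0 ∧ y j ≠ 0 then M j else c j - c j * Real.exp (-(n : ℝ))))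
        Filter.atTop (nhds (∑ j, M j)) := by
      apply tendsto_finset_sum
      intro j _
      by_cases h : c j ≠ 0 ∧ y j ≠ 0
      · simp only [if_pos h]
        exact tendsto_const_nhds
      · have hyj : y j = 0 := by
          by_cases hcj : c j = 0
          · exact hyc j hcj
          · push_neg at h; exact h hcj
        have hMj : M j = c j := by simp [hM, h, hyj]
        simp only [if_neg h, hMj]
        have he : Filter.Tendsto (fun n : ℕ => Real.exp (-(n : ℝ)))
            Filter.atTop (nhds 0) :=
          Real.tendsto_exp_atBot.comp
            (Filter.tendsto_neg_atBot_iff.mpr tendsto_natCast_atTop_atTop)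
        have := (he.const_mul (c j)).const_sub (c j)
        simpa using this
    apply le_of_tendsto htend
    filter_upwards with n
    rw [← hval n]
    exact le_ciSup bdd (tn n)
  have hsup : (⨆ t : J → ℝ, (∑ j, y j * t j - ∑ j, c j * (Real.exp (t j) - 1)))
      = ∑ j, M j := le_antisymm upper lower
  rw [hsup]
  have h1 : ∑ j ∈ Finset.univ.filter (fun j => c j ≠ 0), y j = ∑ j, y j := by
    rw [Finset.sum_filter]
    apply Finset.sum_congr rfl
    intro j _
    by_cases hcj : c j = 0
    · simp [hcj, hyc j hcj]
    · simp [hcj]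
  have h2 : ∑ j ∈ Finset.univ.filter (fun j => c j ≠ 0 ∧ y j ≠ 0),
      y j * Real.log (y j / c j)
      = ∑ j, (if c j ≠ 0 ∧ y j ≠ 0 then y j * Real.log (y j / c j) else 0) := by
    rw [Finset.sum_filter]
  rw [h1, h2, hM]
  rw [← Finset.sum_sub_distrib, ← Finset.sum_add_distrib]
end

section
/- Let r be a nonzero integer and l a nonzero integer. The number of pairs (x,y) ∈ (ℤ ∩ [1,N])² with r·y² − x² = l is O_{r,l}(log N). -/
/-- Gap principle: two distinct solutions of `r y² - x² = l` with `y` in a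
dyadic window `[M, 2M)` (with `M² ≥ 2|l|`) have `y`-gap at least `M/(2|l|)`. -/
lemma estermann_gap (r l M x1 y1 x2 y2 : ℤ) (hr : 1 ≤ r) (hl : l ≠ 0)
    (hx1 : 1 ≤ x1) (hx2 : 1 ≤ x2) (hy1 : 1 ≤ y1)
    (e1 : r * y1 ^ 2 - x1 ^ 2 = l) (e2 : r * y2 ^ 2 - x2 ^ 2 = l)
    (hlt : y1 < y2) (hM1 : M ≤ y1) (hM2 : y2 < 2 * M) (hM0 : 1 ≤ M)
    (hMl : 2 * |l| ≤ M ^ 2) :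
    M ≤ 2 * |l| * (y2 - y1) := by
  have hy2 : 1 ≤ y2 := by linarith
  have key : (x2 * y1 - x1 * y2) * (x2 * y1 + x1 * y2) = l * (y2 ^ 2 - y1 ^ 2) := by
    linear_combination y2 ^ 2 * e1 - y1 ^ 2 * e2
  have hD : x2 * y1 - x1 * y2 ≠ 0 := by
    intro h
    rw [h, zero_mul] at key
    rcases mul_eq_zero.mp key.symm with h1 | h1
    · exact hl h1
    · nlinarith
  have hpos : 0 < x2 * y1 + x1 * y2 := by nlinarith
  have habs : x2 * y1 + x1 * y2 ≤ |l| * (y2 ^ 2 - y1 ^ 2) := by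
    have h1 : 1 ≤ |x2 * y1 - x1 * y2| := Int.one_le_abs hD
    calc x2 * y1 + x1 * y2
        ≤ |x2 * y1 - x1 * y2| * (x2 * y1 + x1 * y2) :=
          le_mul_of_one_le_left hpos.le h1
      _ = |(x2 * y1 - x1 * y2) * (x2 * y1 + x1 * y2)| := by
          rw [abs_mul, abs_of_pos hpos]
      _ = |l * (y2 ^ 2 - y1 ^ 2)| := by rw [key]
      _ = |l| * (y2 ^ 2 - y1 ^ 2) := by
          rw [abs_mul, abs_of_pos (by nlinarith : (0:ℤ) < y2 ^ 2 - y1 ^ 2)]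
  have hlabs : l ≤ |l| := le_abs_self l
  have hlabs' : -|l| ≤ l := neg_abs_le l
  have hx1M : M ≤ 2 * x1 := by nlinarith [sq_nonneg y1, sq_nonneg (2 * x1 - M)]
  have hx2M : M ≤ 2 * x2 := by nlinarith [sq_nonneg y2, sq_nonneg (2 * x2 - M)]
  have hfin : M * (y1 + y2) ≤ 2 * |l| * (y2 - y1) * (y1 + y2) := by
    nlinarith [mul_nonneg (by linarith : (0:ℤ) ≤ 2 * x2 - M) (by linarith : (0:ℤ) ≤ y1),
      mul_nonneg (by linarith : (0:ℤ) ≤ 2 * x1 - M) (by linarith : (0:ℤ) ≤ y2)]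
  exact le_of_mul_le_mul_right hfin (by linarith : (0:ℤ) < y1 + y2)

/-- If two solutions have the same dyadic window and the same bucket inside it,
and `y1 ≤ y2`, then `y1 = y2`. -/
lemma estermann_inj (r l : ℤ) (hr : 1 ≤ r) (hl : l ≠ 0)
    (x1 y1 x2 y2 : ℕ) (hx1 : 1 ≤ x1) (hy1 : 1 ≤ y1) (hx2 : 1 ≤ x2) (hy2 : 1 ≤ y2)
    (e1 : r * (y1 : ℤ) ^ 2 - (x1 : ℤ) ^ 2 = l)
    (e2 : r * (y2 : ℤ) ^ 2 - (x2 : ℤ) ^ 2 = l)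
    (hyle : y1 ≤ y2) (hk : Nat.log 2 y1 = Nat.log 2 y2)
    (hb : (if Nat.log 2 y1 < 2 * l.natAbs then y1 - 2 ^ (Nat.log 2 y1)
            else (y1 - 2 ^ (Nat.log 2 y1)) * (2 * l.natAbs) / 2 ^ (Nat.log 2 y1))
        = (if Nat.log 2 y2 < 2 * l.natAbs then y2 - 2 ^ (Nat.log 2 y2)
            else (y2 - 2 ^ (Nat.log 2 y2)) * (2 * l.natAbs) / 2 ^ (Nat.log 2 y2))) :
    y1 = y2 := by
  set k := Nat.log 2 y1 with hkdef
  set L := l.natAbs with hLdef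
  have hL1 : 1 ≤ L := Int.natAbs_pos.mpr hl
  have hpow1 : 2 ^ k ≤ y1 := Nat.pow_log_le_self 2 (by omega)
  have hpow2 : 2 ^ k ≤ y2 := by
    rw [hk]; exact Nat.pow_log_le_self 2 (by omega)
  have hup2 : y2 < 2 ^ (k + 1) := by
    rw [hk]; exact Nat.lt_pow_succ_log_self (by norm_num) y2
  rw [← hk] at hb
  by_contra hne
  have hlt : y1 < y2 := lt_of_le_of_ne hyle hne
  by_cases hcase : k < 2 * L
  · rw [if_pos hcase, if_pos hcase] at hb
    omega
  · rw [if_neg hcase, if_neg hcase] at hb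
    push_neg at hcase
    obtain ⟨M, hMdef⟩ : ∃ M : ℕ, M = 2 ^ k := ⟨_, rfl⟩
    rw [pow_succ] at hup2
    rw [← hMdef] at hb hpow1 hpow2 hup2
    have hM1' : (1:ℕ) ≤ M := by rw [hMdef]; exact Nat.one_le_two_pow
    have hML : 2 * L < M := by
      rw [hMdef]
      calc 2 * L < 2 ^ (2 * L) := Nat.lt_two_pow_self
        _ ≤ 2 ^ k := Nat.pow_le_pow_right (by norm_num) hcase
    -- bucket equality forces small gap
    have hgap : (y2 - y1) * (2 * L) < M := by
      have hb' : (y1 - M) * (2 * L) / M = (y2 - M) * (2 * L) / M := hb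
      have h1 := Nat.mod_add_div ((y1 - M) * (2 * L)) M
      have h2 := Nat.mod_add_div ((y2 - M) * (2 * L)) M
      have h3 : (y1 - M) * (2 * L) % M < M := Nat.mod_lt _ (by omega)
      have h4 : (y2 - M) * (2 * L) % M < M := Nat.mod_lt _ (by omega)
      have h5 : (y2 - y1) * (2 * L) + (y1 - M) * (2 * L) = (y2 - M) * (2 * L) := by
        rw [← Nat.add_mul]; congr 1; omega
      have h6 : M * ((y1 - M) * (2 * L) / M) = M * ((y2 - M) * (2 * L) / M) := by rw [hb']
      omega
    -- the gap principle forces a big gap: contradiction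
    have habsL : |l| = (L : ℤ) := by rw [hLdef]; exact Int.abs_eq_natAbs l
    have hMl : 2 * |l| ≤ (M : ℤ) ^ 2 := by
      have h : 2 * L ≤ M ^ 2 := by nlinarith
      rw [habsL]
      exact_mod_cast h
    have hbig := estermann_gap r l (M : ℤ) (x1 : ℤ) (y1 : ℤ) (x2 : ℤ) (y2 : ℤ)
      hr hl (by exact_mod_cast hx1) (by exact_mod_cast hx2) (by exact_mod_cast hy1)
      e1 e2 (by exact_mod_cast hlt) (by exact_mod_cast hpow1)
      (by have : (y2 : ℤ) < (M : ℤ) * 2 := by exact_mod_cast hup2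
          linarith)
      (by exact_mod_cast hM1') hMl
    rw [habsL] at hbig
    have hbig2 : (M : ℤ) ≤ 2 * (L : ℤ) * ((y2 : ℤ) - (y1 : ℤ)) := by linarith
    have hcast : (((y2 - y1) * (2 * L) : ℕ) : ℤ) = ((y2 : ℤ) - (y1 : ℤ)) * (2 * (L : ℤ)) := by
      push_cast [Nat.cast_sub hyle]; ring
    have hge : (((y2 - y1) * (2 * L) : ℕ) : ℤ) ≥ (M : ℤ) := by
      rw [hcast]; linarith
    have : M ≤ (y2 - y1) * (2 * L) := by exact_mod_cast hge
    omega

/-- Main counting bound in ℕ, case `r ≥ 1`. -/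
lemma estermann_count_pos (r l : ℤ) (hr : 1 ≤ r) (hl : l ≠ 0) (N : ℕ) (hN : 1 ≤ N) :
    (((Finset.Icc 1 N) ×ˢ (Finset.Icc 1 N)).filter
        (fun xy : ℕ × ℕ => r * (xy.2 : ℤ) ^ 2 - (xy.1 : ℤ) ^ 2 = l)).card
      ≤ (Nat.log 2 N + 1) * (4 ^ l.natAbs + 2 * l.natAbs) := by
  set L := l.natAbs with hLdef
  have hL1 : 1 ≤ L := Int.natAbs_pos.mpr hl
  classical
  set S := ((Finset.Icc 1 N) ×ˢ (Finset.Icc 1 N)).filter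
      (fun xy : ℕ × ℕ => r * (xy.2 : ℤ) ^ 2 - (xy.1 : ℤ) ^ 2 = l) with hS
  set f : ℕ × ℕ → ℕ × ℕ := fun p =>
    (Nat.log 2 p.2,
      if Nat.log 2 p.2 < 2 * L then p.2 - 2 ^ (Nat.log 2 p.2)
      else (p.2 - 2 ^ (Nat.log 2 p.2)) * (2 * L) / 2 ^ (Nat.log 2 p.2)) with hf
  have hmem : ∀ p ∈ S, f p ∈ Finset.range (Nat.log 2 N + 1) ×ˢ Finset.range (4 ^ L + 2 * L) := by
    intro p hp
    simp only [hS, Finset.mem_filter, Finset.mem_product, Finset.mem_Icc] at hp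
    obtain ⟨⟨⟨hx1, hxN⟩, hy1, hyN⟩, he⟩ := hp
    simp only [hf, Finset.mem_product, Finset.mem_range]
    constructor
    · have := Nat.log_mono_right (b := 2) hyN
      omega
    · have hup : p.2 < 2 ^ (Nat.log 2 p.2 + 1) := Nat.lt_pow_succ_log_self (by norm_num) p.2
      have hlow : 2 ^ (Nat.log 2 p.2) ≤ p.2 := Nat.pow_log_le_self 2 (by omega)
      by_cases hc : Nat.log 2 p.2 < 2 * L
      · rw [if_pos hc]
        have h1 : p.2 - 2 ^ (Nat.log 2 p.2) < 2 ^ (Nat.log 2 p.2) := by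
          rw [pow_succ] at hup; omega
        have h2 : (2:ℕ) ^ (Nat.log 2 p.2) < 2 ^ (2 * L) :=
          Nat.pow_lt_pow_right (by norm_num) hc
        have h3 : (2:ℕ) ^ (2 * L) = 4 ^ L := by
          rw [pow_mul]; norm_num
        have h4L : 1 ≤ 4 ^ L := Nat.one_le_pow _ _ (by norm_num)
        omega
      · rw [if_neg hc]
        have h1 : (p.2 - 2 ^ (Nat.log 2 p.2)) * (2 * L) / 2 ^ (Nat.log 2 p.2) < 2 * L := by
          have hsmall : p.2 - 2 ^ (Nat.log 2 p.2) < 2 ^ (Nat.log 2 p.2) := by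
            rw [pow_succ] at hup; omega
          exact Nat.div_lt_of_lt_mul (mul_lt_mul_of_pos_right hsmall (by positivity))
        have h4L : 1 ≤ 4 ^ L := Nat.one_le_pow _ _ (by norm_num)
        omega
  have hinj : Set.InjOn f S := by
    intro p hp q hq hfpq
    simp only [hS, Finset.mem_coe, Finset.mem_filter, Finset.mem_product, Finset.mem_Icc] at hp hq
    obtain ⟨⟨⟨hpx1, hpxN⟩, hpy1, hpyN⟩, hpe⟩ := hp
    obtain ⟨⟨⟨hqx1, hqxN⟩, hqy1, hqyN⟩, hqe⟩ := hq
    simp only [hf, Prod.mk.injEq] at hfpq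
    obtain ⟨hk, hb⟩ := hfpq
    have hy : p.2 = q.2 := by
      rcases le_total p.2 q.2 with h | h
      · exact estermann_inj r l hr hl p.1 p.2 q.1 q.2 hpx1 hpy1 hqx1 hqy1 hpe hqe h hk hb
      · exact (estermann_inj r l hr hl q.1 q.2 p.1 p.2 hqx1 hqy1 hpx1 hpy1 hqe hpe h
          hk.symm hb.symm).symm
    have hx : p.1 = q.1 := by
      have h2 : (p.1 : ℤ) ^ 2 = (q.1 : ℤ) ^ 2 := by
        rw [hy] at hpe; linarith
      have h3 : (p.1 : ℕ) ^ 2 = (q.1 : ℕ) ^ 2 := by exact_mod_cast h2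
      nlinarith
    exact Prod.ext hx hy
  calc S.card ≤ (Finset.range (Nat.log 2 N + 1) ×ˢ Finset.range (4 ^ L + 2 * L)).card :=
        Finset.card_le_card_of_injOn f hmem hinj
    _ = (Nat.log 2 N + 1) * (4 ^ L + 2 * L) := by
        rw [Finset.card_product, Finset.card_range, Finset.card_range]

/-- Counting bound in ℕ, case `r ≤ -1`. -/
lemma estermann_count_neg (r l : ℤ) (hr : r ≤ -1) (hl : l ≠ 0) (N : ℕ) :
    (((Finset.Icc 1 N) ×ˢ (Finset.Icc 1 N)).filter
        (fun xy : ℕ × ℕ => r * (xy.2 : ℤ) ^ 2 - (xy.1 : ℤ) ^ 2 = l)).card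
      ≤ l.natAbs := by
  classical
  set L := l.natAbs with hLdef
  set S := ((Finset.Icc 1 N) ×ˢ (Finset.Icc 1 N)).filter
      (fun xy : ℕ × ℕ => r * (xy.2 : ℤ) ^ 2 - (xy.1 : ℤ) ^ 2 = l) with hS
  have hmem : ∀ p ∈ S, p.2 ∈ Finset.Icc 1 L := by
    intro p hp
    simp only [hS, Finset.mem_filter, Finset.mem_product, Finset.mem_Icc] at hp
    obtain ⟨⟨⟨hx1, hxN⟩, hy1, hyN⟩, he⟩ := hp
    rw [Finset.mem_Icc]
    refine ⟨hy1, ?_⟩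
    have hx1' : (1:ℤ) ≤ (p.1 : ℤ) := by exact_mod_cast hx1
    have hy1' : (1:ℤ) ≤ (p.2 : ℤ) := by exact_mod_cast hy1
    have hsq : (p.2 : ℤ) ^ 2 ≤ |l| := by
      have : l ≤ -((p.2:ℤ)^2) - 1 := by nlinarith
      have h2 : (p.2:ℤ)^2 + 1 ≤ -l := by linarith
      have h3 : -l ≤ |l| := neg_le_abs l
      linarith
    have hsq' : (p.2 : ℤ) ≤ |l| := by nlinarith
    rw [Int.abs_eq_natAbs] at hsq'
    exact_mod_cast hsq'
  have hinj : Set.InjOn (fun p : ℕ × ℕ => p.2) S := by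
    intro p hp q hq hfpq
    simp only [hS, Finset.mem_coe, Finset.mem_filter, Finset.mem_product, Finset.mem_Icc] at hp hq
    obtain ⟨⟨⟨hpx1, hpxN⟩, hpy1, hpyN⟩, hpe⟩ := hp
    obtain ⟨⟨⟨hqx1, hqxN⟩, hqy1, hqyN⟩, hqe⟩ := hq
    simp only at hfpq
    have hx : p.1 = q.1 := by
      have h2 : (p.1 : ℤ) ^ 2 = (q.1 : ℤ) ^ 2 := by
        rw [hfpq] at hpe; linarith
      have h3 : (p.1 : ℕ) ^ 2 = (q.1 : ℕ) ^ 2 := by exact_mod_cast h2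
      nlinarith
    exact Prod.ext hx hfpq
  calc S.card ≤ (Finset.Icc 1 L).card := Finset.card_le_card_of_injOn _ hmem hinj
    _ ≤ L := by rw [Nat.card_Icc]; omega

theorem estermann_pell_type_count (r l : ℤ) (hr : r ≠ 0) (hl : l ≠ 0) :
    ∃ C : ℝ, ∀ N : ℕ, 2 ≤ N →
      ((((Finset.Icc 1 N) ×ˢ (Finset.Icc 1 N)).filter
          (fun xy : ℕ × ℕ => r * (xy.2 : ℤ) ^ 2 - (xy.1 : ℤ) ^ 2 = l)).card : ℝ)
        ≤ C * Real.log N := by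
  set L := l.natAbs with hLdef
  set K : ℕ := 4 ^ L + 2 * L with hKdef
  have hL1 : 1 ≤ L := Int.natAbs_pos.mpr hl
  have hK1 : 1 ≤ K := by
    have h4L : 1 ≤ 4 ^ L := Nat.one_le_pow _ _ (by norm_num)
    omega
  -- uniform natural-number bound
  have hcount : ∀ N : ℕ, 2 ≤ N →
      (((Finset.Icc 1 N) ×ˢ (Finset.Icc 1 N)).filter
          (fun xy : ℕ × ℕ => r * (xy.2 : ℤ) ^ 2 - (xy.1 : ℤ) ^ 2 = l)).card
        ≤ (Nat.log 2 N + 1) * K := by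
    intro N hN
    rcases lt_or_ge r 0 with hneg | hpos
    · have h1 := estermann_count_neg r l (by omega) hl N
      calc _ ≤ L := h1
        _ ≤ K := by
            have : L ≤ 4 ^ L := Nat.le_of_lt (Nat.lt_pow_self (n := L) (by norm_num))
            omega
        _ ≤ (Nat.log 2 N + 1) * K := Nat.le_mul_of_pos_left K (by omega)
    · exact estermann_count_pos r l (by omega) hl N (by omega)
  refine ⟨2 * K / Real.log 2, fun N hN => ?_⟩
  have hlog2 : (0:ℝ) < Real.log 2 := Real.log_pos (by norm_num)
  have hNR : (2:ℝ) ≤ (N:ℝ) := by exact_mod_cast hN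
  have hlogN : Real.log 2 ≤ Real.log N := Real.log_le_log (by norm_num) hNR
  have hlogNpos : 0 < Real.log N := lt_of_lt_of_le hlog2 hlogN
  -- Nat.log 2 N ≤ log N / log 2
  have hnatlog : (Nat.log 2 N : ℝ) * Real.log 2 ≤ Real.log N := by
    have h1 : (2:ℕ) ^ (Nat.log 2 N) ≤ N := Nat.pow_log_le_self 2 (by omega)
    have h2 : ((2:ℝ)) ^ (Nat.log 2 N) ≤ (N:ℝ) := by exact_mod_cast h1
    calc (Nat.log 2 N : ℝ) * Real.log 2 = Real.log ((2:ℝ) ^ (Nat.log 2 N)) := by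
          rw [Real.log_pow]
      _ ≤ Real.log N := Real.log_le_log (by positivity) h2
  have hcard := hcount N hN
  have hcardR : ((((Finset.Icc 1 N) ×ˢ (Finset.Icc 1 N)).filter
          (fun xy : ℕ × ℕ => r * (xy.2 : ℤ) ^ 2 - (xy.1 : ℤ) ^ 2 = l)).card : ℝ)
        ≤ ((Nat.log 2 N : ℝ) + 1) * K := by exact_mod_cast hcard
  have hKpos : (0:ℝ) < K := by exact_mod_cast hK1
  calc ((((Finset.Icc 1 N) ×ˢ (Finset.Icc 1 N)).filter
          (fun xy : ℕ × ℕ => r * (xy.2 : ℤ) ^ 2 - (xy.1 : ℤ) ^ 2 = l)).card : ℝ)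
      ≤ ((Nat.log 2 N : ℝ) + 1) * K := hcardR
    _ ≤ (Real.log N / Real.log 2 + Real.log N / Real.log 2) * K := by
        apply mul_le_mul_of_nonneg_right _ hKpos.le
        have h1 : (Nat.log 2 N : ℝ) ≤ Real.log N / Real.log 2 := by
          rw [le_div_iff₀ hlog2]; exact hnatlog
        have h2 : (1:ℝ) ≤ Real.log N / Real.log 2 := by
          rw [le_div_iff₀ hlog2]; linarith
        linarith
    _ = 2 * K / Real.log 2 * Real.log N := by ring
end
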